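/- Let p(n) satisfy c_l(n) := n^d(1+ld)p(n)/d! - log n - l log log n → +∞. Then for any function f(n) ≫ n^{ld/(1+ld)} (log n)^{-l/(1+ld)}, a.a.s. the number μ of vertices outside the largest component of G^{d+1}(n,p) satisfies μ < f(n). -/

import Mathlib

open Finset Filter Asymptotics

noncomputable section
open scoped Classical

/-- The type of potential edges of a `(d+1)`-uniform hypergraph on `n` vertices. -/
abbrev Edge (d n : ℕ) := {s : Finset (Fin n) // s.card = d + 1}

/-- Probability of an event in the binomial random `(d+1)`-uniform hypergraph `G^{d+1}(n,p)`. -/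
def hprob (d n : ℕ) (p : ℝ) (P : Finset (Edge d n) → Prop) : ℝ :=
  ∑ H : Finset (Edge d n),
    if P H then p ^ H.card * (1 - p) ^ (Fintype.card (Edge d n) - H.card) else 0

/-- Expectation of a random variable on `G^{d+1}(n,p)`. -/
def hexp (d n : ℕ) (p : ℝ) (X : Finset (Edge d n) → ℝ) : ℝ :=
  ∑ H : Finset (Edge d n),
    p ^ H.card * (1 - p) ^ (Fintype.card (Edge d n) - H.card) * X H

/-- Two vertices are adjacent if they are distinct and share an edge. -/
def eadj {d n : ℕ} (H : Finset (Edge d n)) (x y : Fin n) : Prop :=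
  x ≠ y ∧ ∃ e ∈ H, x ∈ e.1 ∧ y ∈ e.1

/-- The connected component of a vertex, as a finset. -/
def ecomp {d n : ℕ} (H : Finset (Edge d n)) (x : Fin n) : Finset (Fin n) :=
  Finset.univ.filter fun y => Relation.ReflTransGen (eadj H) x y

/-- The hypergraph is connected. -/
def econn {d n : ℕ} (H : Finset (Edge d n)) : Prop :=
  ∀ x y : Fin n, Relation.ReflTransGen (eadj H) x y

/-- The incidence graph of a hypergraph (a bipartite graph between vertices and edges);
Berge-acyclicity means this graph is acyclic. -/
def einc {d n : ℕ} (H : Finset (Edge d n)) : SimpleGraph (Fin n ⊕ Edge d n) where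
  Adj a b := (∃ v e, a = Sum.inl v ∧ b = Sum.inr e ∧ e ∈ H ∧ v ∈ e.1) ∨
             (∃ v e, b = Sum.inl v ∧ a = Sum.inr e ∧ e ∈ H ∧ v ∈ e.1)
  symm := ⟨fun a b h => h.symm⟩
  loopless := ⟨by rintro a (⟨v, e, rfl, h2, -⟩ | ⟨v, e, rfl, h2, -⟩) <;> simp at h2⟩

/-- The image of an edge under an injection of vertex sets. -/
def mapEdge {d v n : ℕ} (f : Fin v ↪ Fin n) (e : Edge d v) : Edge d n :=
  ⟨e.1.map f, by rw [Finset.card_map]; exact e.2⟩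

/-- A butterfly of order `l`: a connected Berge-acyclic `(d+1)`-uniform hypergraph with `l`
edges, on its `1 + l*d` vertices. -/
def IsButterfly (d l : ℕ) (K : Finset (Edge d (1 + l * d))) : Prop :=
  K.card = l ∧ (∀ x y : Fin (1 + l * d), Relation.ReflTransGen (eadj K) x y) ∧
    (einc K).IsAcyclic

/-- The degree of a vertex: the number of edges containing it. -/
def edeg {d n : ℕ} (H : Finset (Edge d n)) (x : Fin n) : ℕ :=
  (H.filter fun e => x ∈ e.1).card

/-- `f` embeds `K` as a connected-component copy in `H`: all edges of `K` are present
and no edge of `H` meets the image except images of edges of `K`. -/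
def IsCompCopy {d v n : ℕ} (K : Finset (Edge d v)) (H : Finset (Edge d n))
    (f : Fin v ↪ Fin n) : Prop :=
  (∀ e ∈ K, mapEdge f e ∈ H) ∧
    ∀ e ∈ H, (∃ i, f i ∈ e.1) → ∃ e' ∈ K, e = mapEdge f e'

/-- The number of connected components of `H` isomorphic to `K`. -/
def numCompCopies {d v n : ℕ} (K : Finset (Edge d v)) (H : Finset (Edge d n)) : ℕ :=
  ((Finset.univ : Finset (Finset (Fin n))).filter fun s =>
    ∃ f : Fin v ↪ Fin n, IsCompCopy K H f ∧ Finset.univ.map f = s).card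

/-- Two hypergraphs on the same labelled vertex set are isomorphic. -/
def EquivHyper {d v : ℕ} (K K' : Finset (Edge d v)) : Prop :=
  ∃ g : Fin v ≃ Fin v, ∀ e : Edge d v, e ∈ K ↔ mapEdge g.toEmbedding e ∈ K'

/-- The number of hypergraphs on `v` labelled vertices isomorphic to `K`. -/
def countType {d v : ℕ} (K : Finset (Edge d v)) : ℕ :=
  ((Finset.univ : Finset (Finset (Edge d v))).filter fun K' => EquivHyper K' K).card

/-- The number of vertices of the largest connected component. -/
def giantSize {d n : ℕ} (H : Finset (Edge d n)) : ℕ :=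
  Finset.univ.sup fun x : Fin n => (ecomp H x).card

/-- `μ`: the number of vertices outside the largest connected component. -/
def mu {d n : ℕ} (H : Finset (Edge d n)) : ℕ := n - giantSize H

/-- An edge of a Berge-acyclic hypergraph is a leaf if it is incident to exactly one
other edge. -/
def IsLeaf {d v : ℕ} (K : Finset (Edge d v)) (e : Edge d v) : Prop :=
  e ∈ K ∧ (K.filter fun e' => e' ≠ e ∧ (e'.1 ∩ e.1).Nonempty).card = 1

/-- A `v*`-marked `l`-butterfly `(K, M)` is minimal if every leaf edge contains a marked
vertex. -/
def IsMinimalMarked {d v : ℕ} (K : Finset (Edge d v)) (M : Finset (Fin v)) : Prop :=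
  ∀ e ∈ K, IsLeaf K e → ∃ x ∈ e.1, x ∈ M

/-- The number of copies of the marked butterfly `(K, M)` in `H`: not-necessarily-induced
sub-hypergraphs isomorphic to `K` in which each marked vertex has the same degree in `H`
as in `K`. Copies are counted by their (edge set, marked vertex set) pair. -/
def numMarkedCopies {d v n : ℕ} (K : Finset (Edge d v)) (M : Finset (Fin v))
    (H : Finset (Edge d n)) : ℕ :=
  Set.ncard {q : Finset (Edge d n) × Finset (Fin n) |
    ∃ f : Fin v ↪ Fin n, (∀ e ∈ K, mapEdge f e ∈ H) ∧
      (∀ x ∈ M, edeg H (f x) = edeg K x) ∧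
      q.1 = K.image (mapEdge f) ∧ q.2 = M.map f}

/-- Two marked hypergraphs on the same labelled vertex set are isomorphic. -/
def EquivMarked {d v : ℕ} (K K' : Finset (Edge d v)) (M M' : Finset (Fin v)) : Prop :=
  ∃ g : Fin v ≃ Fin v, (∀ e : Edge d v, e ∈ K ↔ mapEdge g.toEmbedding e ∈ K') ∧
    M.map g.toEmbedding = M'

/-- The number of marked hypergraphs on `v` labelled vertices isomorphic to `(K, M)`. -/
def countMarkedType {d v : ℕ} (K : Finset (Edge d v)) (M : Finset (Fin v)) : ℕ :=
  ((Finset.univ : Finset (Finset (Edge d v) × Finset (Fin v))).filter fun q =>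
    EquivMarked q.1 K q.2 M).card

/-- The ball of radius `r` around a vertex in the hypergraph distance. -/
def hball {d n : ℕ} (H : Finset (Edge d n)) (x : Fin n) : ℕ → Finset (Fin n)
  | 0 => {x}
  | r + 1 => hball H x r ∪ Finset.univ.filter fun y => ∃ z ∈ hball H x r, eadj H z y

set_option maxHeartbeats 1000000

-- Probability layer
section Prob
variable {d n : ℕ} {p : ℝ}

/-- weight of a hypergraph -/
def hwt (d n : ℕ) (p : ℝ) (H : Finset (Edge d n)) : ℝ :=
  p ^ H.card * (1 - p) ^ (Fintype.card (Edge d n) - H.card)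

lemma hwt_nonneg (h0 : 0 ≤ p) (h1 : p ≤ 1) (H : Finset (Edge d n)) : 0 ≤ hwt d n p H := by
  have : (0:ℝ) ≤ 1 - p := by linarith
  exact mul_nonneg (pow_nonneg h0 _) (pow_nonneg this _)

lemma hprob_eq_sum (P : Finset (Edge d n) → Prop) :
    hprob d n p P = ∑ H : Finset (Edge d n), if P H then hwt d n p H else 0 := rfl

lemma sum_hwt_powerset (q : ℝ) (C : Finset (Edge d n)) :
    ∑ H ∈ C.powerset, q ^ H.card * (1 - q) ^ (C.card - H.card) = 1 := by
  have h := Finset.prod_add (fun _ : Edge d n => q) (fun _ => 1 - q) C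
  simp only [Finset.prod_const] at h
  have h2 : ∀ H ∈ C.powerset, (q : ℝ) ^ H.card * (1 - q) ^ (C \ H).card
      = q ^ H.card * (1 - q) ^ (C.card - H.card) := by
    intro H hH
    rw [Finset.card_sdiff_of_subset (Finset.mem_powerset.mp hH)]
  rw [Finset.sum_congr rfl h2] at h
  simpa using h.symm

lemma sum_hwt (q : ℝ) : ∑ H : Finset (Edge d n), q ^ H.card *
    (1 - q) ^ (Fintype.card (Edge d n) - H.card) = 1 := by
  have := sum_hwt_powerset (d := d) (n := n) q Finset.univ
  rwa [Finset.powerset_univ, Finset.card_univ] at this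

lemma hprob_nonneg (h0 : 0 ≤ p) (h1 : p ≤ 1) (P : Finset (Edge d n) → Prop) :
    0 ≤ hprob d n p P := by
  rw [hprob_eq_sum]
  refine Finset.sum_nonneg fun H _ => ?_
  split
  · exact hwt_nonneg h0 h1 H
  · exact le_rfl

lemma hprob_mono (h0 : 0 ≤ p) (h1 : p ≤ 1) {P Q : Finset (Edge d n) → Prop}
    (h : ∀ H, P H → Q H) : hprob d n p P ≤ hprob d n p Q := by
  rw [hprob_eq_sum, hprob_eq_sum]
  refine Finset.sum_le_sum fun H _ => ?_
  by_cases hP : P H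
  · simp [hP, h H hP]
  · simp only [hP, if_false]
    split
    · exact hwt_nonneg h0 h1 H
    · exact le_rfl

lemma hprob_add_compl (P : Finset (Edge d n) → Prop) :
    hprob d n p P + hprob d n p (fun H => ¬ P H) = 1 := by
  rw [hprob_eq_sum, hprob_eq_sum, ← Finset.sum_add_distrib]
  rw [show (1:ℝ) = ∑ H : Finset (Edge d n), hwt d n p H from (sum_hwt p).symm]
  refine Finset.sum_congr rfl fun H _ => ?_
  by_cases hP : P H <;> simp [hP]

lemma sum_ite_filter (P : Finset (Edge d n) → Prop) :
    (∑ H : Finset (Edge d n), if P H then hwt d n p H else 0)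
      = ∑ H ∈ Finset.univ.filter P, hwt d n p H := (Finset.sum_filter _ _).symm

lemma hprob_sum_le (h0 : 0 ≤ p) (h1 : p ≤ 1) {ι : Type*} (I : Finset ι)
    (P : ι → Finset (Edge d n) → Prop) :
    hprob d n p (fun H => ∃ i ∈ I, P i H) ≤ ∑ i ∈ I, hprob d n p (P i) := by
  simp only [hprob_eq_sum]
  rw [Finset.sum_comm]
  refine Finset.sum_le_sum fun H _ => ?_
  by_cases hE : ∃ i ∈ I, P i H
  · rw [if_pos hE]
    obtain ⟨i, hi, hPi⟩ := hE
    refine le_trans (le_of_eq (b := if P i H then hwt d n p H else 0) (if_pos hPi).symm) ?_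
    exact Finset.single_le_sum (f := fun j => if P j H then hwt d n p H else 0)
      (fun j _ => by by_cases h : P j H <;> simp [h, hwt_nonneg h0 h1 H]) hi
  · rw [if_neg hE]
    exact Finset.sum_nonneg fun i _ => by
      by_cases h : P i H <;> simp [h, hwt_nonneg h0 h1 H]

lemma hprob_disjoint (B : Finset (Edge d n)) :
    hprob d n p (fun H => Disjoint H B) = (1 - p) ^ B.card := by
  rw [hprob_eq_sum, sum_ite_filter]
  rw [Finset.sum_congr (s₂ := (Finset.univ \ B).powerset)
    (by ext H; simp [Finset.mem_powerset, Finset.subset_sdiff]) (fun _ _ => rfl)]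
  have hN : Fintype.card (Edge d n) = (Finset.univ \ B).card + B.card := by
    have := Finset.card_le_univ B
    rw [Finset.card_sdiff_of_subset (Finset.subset_univ B), Finset.card_univ]
    omega
  have key : ∀ H ∈ (Finset.univ \ B).powerset,
      hwt d n p H = (1 - p) ^ B.card *
        (p ^ H.card * (1 - p) ^ ((Finset.univ \ B).card - H.card)) := by
    intro H hH
    have hle : H.card ≤ (Finset.univ \ B).card :=
      Finset.card_le_card (Finset.mem_powerset.mp hH)
    rw [hwt, hN]
    rw [show (Finset.univ \ B).card + B.card - H.card
        = B.card + ((Finset.univ \ B).card - H.card) by omega, pow_add]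
    ring
  rw [Finset.sum_congr rfl key, ← Finset.mul_sum, sum_hwt_powerset, mul_one]

end Prob

section Graph
variable {d n : ℕ}

lemma eadj_symm (H : Finset (Edge d n)) : Symmetric (eadj H) :=
  fun _ _ ⟨hxy, e, he, hx, hy⟩ => ⟨hxy.symm, e, he, hy, hx⟩

lemma reach_symm (H : Finset (Edge d n)) {x y : Fin n}
    (h : Relation.ReflTransGen (eadj H) x y) : Relation.ReflTransGen (eadj H) y x :=
  by haveI : Std.Symm (eadj H) := ⟨eadj_symm H⟩; exact Std.Symm.symm (r := Relation.ReflTransGen (eadj H)) _ _ h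

lemma mem_ecomp {H : Finset (Edge d n)} {x y : Fin n} :
    y ∈ ecomp H x ↔ Relation.ReflTransGen (eadj H) x y := by
  simp [ecomp]

lemma mem_ecomp_self (H : Finset (Edge d n)) (x : Fin n) : x ∈ ecomp H x :=
  mem_ecomp.mpr Relation.ReflTransGen.refl

lemma ecomp_eq {H : Finset (Edge d n)} {x y : Fin n}
    (h : Relation.ReflTransGen (eadj H) x y) : ecomp H x = ecomp H y := by
  ext z
  simp only [mem_ecomp]
  exact ⟨fun hz => (reach_symm H h).trans hz, fun hz => h.trans hz⟩

/-- A set closed under adjacency. -/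
def Closed (H : Finset (Edge d n)) (S : Finset (Fin n)) : Prop :=
  ∀ x ∈ S, ∀ y, eadj H x y → y ∈ S

lemma ecomp_closed (H : Finset (Edge d n)) (x : Fin n) : Closed H (ecomp H x) := by
  intro a ha y hay
  exact mem_ecomp.mpr ((mem_ecomp.mp ha).tail hay)

lemma compl_ecomp_closed (H : Finset (Edge d n)) (x : Fin n) :
    Closed H (Finset.univ \ ecomp H x) := by
  intro a ha y hay
  simp only [Finset.mem_sdiff, Finset.mem_univ, true_and] at ha ⊢
  intro hy
  exact ha (mem_ecomp.mpr ((mem_ecomp.mp hy).tail (eadj_symm H hay)))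

lemma card_ecomp_le_giantSize (H : Finset (Edge d n)) (x : Fin n) :
    (ecomp H x).card ≤ giantSize H :=
  Finset.le_sup (f := fun y => (ecomp H y).card) (Finset.mem_univ x)

/-- Greedy subfamily-sum lemma. -/
lemma greedy {β : Type*} (s₀ : ℕ) (h1 : 1 ≤ s₀) (F : Finset β) (w : β → ℕ)
    (hw : ∀ b ∈ F, w b < s₀) (htot : s₀ ≤ ∑ b ∈ F, w b) :
    ∃ G ⊆ F, s₀ ≤ ∑ b ∈ G, w b ∧ ∑ b ∈ G, w b < 2 * s₀ := by
  classical
  induction F using Finset.induction_on with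
  | empty => simp at htot; omega
  | @insert a s ha ih =>
    rw [Finset.sum_insert ha] at htot
    by_cases hs : s₀ ≤ ∑ b ∈ s, w b
    · obtain ⟨G, hG, h2, h3⟩ := ih (fun b hb => hw b (Finset.mem_insert_of_mem hb)) hs
      exact ⟨G, hG.trans (Finset.subset_insert a s), h2, h3⟩
    · refine ⟨insert a s, Finset.Subset.refl _, ?_, ?_⟩
      · rw [Finset.sum_insert ha]; omega
      · rw [Finset.sum_insert ha]
        have := hw a (Finset.mem_insert_self a s)
        omega

lemma exists_closed_medium (H : Finset (Edge d n)) (s₀ : ℕ) (h1 : 1 ≤ s₀)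
    (h4 : 4 * s₀ ≤ n) (hmu : s₀ ≤ mu H) :
    ∃ S : Finset (Fin n), Closed H S ∧ s₀ ≤ S.card ∧ 2 * S.card ≤ n := by
  classical
  have hn : 0 < n := by omega
  -- vertex with maximal component
  obtain ⟨x₀, -, hx₀⟩ := Finset.exists_mem_eq_sup (Finset.univ : Finset (Fin n))
    (Finset.univ_nonempty_iff.mpr ⟨⟨0, hn⟩⟩) (fun x => (ecomp H x).card)
  have hg : giantSize H = (ecomp H x₀).card := hx₀
  have hgle : (ecomp H x₀).card ≤ n := by
    simpa using Finset.card_le_card (Finset.subset_univ (ecomp H x₀))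
  have hmu' : mu H = n - (ecomp H x₀).card := by rw [mu, hg]
  by_cases hcase : 2 * (n - (ecomp H x₀).card) ≤ n
  · refine ⟨Finset.univ \ ecomp H x₀, compl_ecomp_closed H x₀, ?_, ?_⟩ <;>
      rw [Finset.card_sdiff_of_subset (Finset.subset_univ _), Finset.card_univ, Fintype.card_fin] <;>
      omega
  · push_neg at hcase
    by_cases hbig : s₀ ≤ (ecomp H x₀).card
    · exact ⟨ecomp H x₀, ecomp_closed H x₀, hbig, by omega⟩
    · push_neg at hbig
      -- all components are small; greedy
      set 𝒞 : Finset (Finset (Fin n)) := Finset.univ.image (ecomp H) with h𝒞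
      have hdisj : ∀ C₁ ∈ 𝒞, ∀ C₂ ∈ 𝒞, C₁ ≠ C₂ → Disjoint C₁ C₂ := by
        intro C₁ hC₁ C₂ hC₂ hne
        obtain ⟨x, -, rfl⟩ := Finset.mem_image.mp hC₁
        obtain ⟨y, -, rfl⟩ := Finset.mem_image.mp hC₂
        rw [Finset.disjoint_left]
        intro z hz hz'
        exact hne ((ecomp_eq (mem_ecomp.mp hz)).trans (ecomp_eq (mem_ecomp.mp hz')).symm)
      have hcover : 𝒞.biUnion (fun C => C) = Finset.univ := by
        refine Finset.eq_univ_of_forall fun x => ?_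
        exact Finset.mem_biUnion.mpr ⟨ecomp H x,
          Finset.mem_image.mpr ⟨x, Finset.mem_univ x, rfl⟩, mem_ecomp_self H x⟩
      have hsum : ∑ C ∈ 𝒞, C.card = n := by
        rw [← Finset.card_biUnion hdisj, hcover, Finset.card_univ, Fintype.card_fin]
      have hsmall : ∀ C ∈ 𝒞, C.card < s₀ := by
        intro C hC
        obtain ⟨x, -, rfl⟩ := Finset.mem_image.mp hC
        calc (ecomp H x).card ≤ giantSize H := card_ecomp_le_giantSize H x
          _ = (ecomp H x₀).card := hg
          _ < s₀ := hbig
      obtain ⟨G, hG, hge, hlt⟩ := greedy s₀ h1 𝒞 Finset.card hsmall (by omega)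
      refine ⟨G.biUnion (fun C => C), ?_, ?_, ?_⟩
      · intro a ha y hay
        obtain ⟨C, hC, haC⟩ := Finset.mem_biUnion.mp ha
        obtain ⟨x, -, rfl⟩ := Finset.mem_image.mp (hG hC)
        exact Finset.mem_biUnion.mpr ⟨ecomp H x, hC, ecomp_closed H x _ haC _ hay⟩
      · rw [Finset.card_biUnion (fun C₁ h₁ C₂ h₂ hne => hdisj C₁ (hG h₁) C₂ (hG h₂) hne)]
        exact hge
      · rw [Finset.card_biUnion (fun C₁ h₁ C₂ h₂ hne => hdisj C₁ (hG h₁) C₂ (hG h₂) hne)]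
        omega

end Graph

section Count
variable {d n : ℕ}

/-- Edges with exactly one vertex in `S`. -/
def crossE (d n : ℕ) (S : Finset (Fin n)) : Finset (Edge d n) :=
  Finset.univ.filter fun e : Edge d n => (e.1 ∩ S).card = 1

lemma closed_disjoint_crossE (hd : 1 ≤ d) {H : Finset (Edge d n)} {S : Finset (Fin n)}
    (hS : Closed H S) : Disjoint H (crossE d n S) := by
  rw [Finset.disjoint_left]
  intro e he hecross
  rw [crossE, Finset.mem_filter] at hecross
  obtain ⟨-, hcard⟩ := hecross
  obtain ⟨v, hv⟩ := Finset.card_eq_one.mp hcard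
  have hvS : v ∈ e.1 ∧ v ∈ S := by
    have : v ∈ e.1 ∩ S := hv ▸ Finset.mem_singleton_self v
    exact ⟨(Finset.mem_inter.mp this).1, (Finset.mem_inter.mp this).2⟩
  have hsub : e.1 ⊆ S := by
    intro y hy
    by_cases hyv : y = v
    · exact hyv ▸ hvS.2
    · exact hS v hvS.2 y ⟨fun h => hyv (h.symm), e, he, hvS.1, hy⟩
  have : e.1 ∩ S = e.1 := Finset.inter_eq_left.mpr hsub
  rw [this, e.2] at hcard
  omega

lemma card_crossE_ge {S : Finset (Fin n)} :
    S.card * ((n - S.card).choose d) ≤ (crossE d n S).card := by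
  classical
  set P := (Finset.univ \ S).powersetCard d with hP
  have hprop : ∀ q : Fin n × Finset (Fin n), q ∈ S ×ˢ P →
      q.1 ∈ S ∧ q.2.card = d ∧ q.1 ∉ q.2 ∧ q.2 ∩ S = ∅ := by
    intro q hq
    rw [Finset.mem_product] at hq
    obtain ⟨h1, h2⟩ := hq
    rw [hP, Finset.mem_powersetCard] at h2
    obtain ⟨hsub, hcard⟩ := h2
    refine ⟨h1, hcard, fun hmem => ?_, ?_⟩
    · exact (Finset.mem_sdiff.mp (hsub hmem)).2 h1
    · ext x
      simp only [Finset.mem_inter, Finset.notMem_empty, iff_false, not_and]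
      intro hx
      exact (Finset.mem_sdiff.mp (hsub hx)).2
  have hcardins : ∀ q : Fin n × Finset (Fin n), q ∈ S ×ˢ P →
      (insert q.1 q.2).card = d + 1 := by
    intro q hq
    obtain ⟨-, h2, h3, -⟩ := hprop q hq
    rw [Finset.card_insert_of_notMem h3, h2]
  have hkey : ((S ×ˢ P).attach.card ≤ (crossE d n S).card) := by
    refine Finset.card_le_card_of_injOn
      (fun q => (⟨insert q.1.1 q.1.2, hcardins q.1 q.2⟩ : Edge d n)) ?_ ?_
    · intro q _
      rw [crossE, Finset.mem_coe, Finset.mem_filter]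
      refine ⟨Finset.mem_univ _, ?_⟩
      obtain ⟨h1, -, -, h4⟩ := hprop q.1 q.2
      have : insert q.1.1 q.1.2 ∩ S = {q.1.1} := by
        rw [Finset.insert_inter_of_mem h1, h4]
        simp
      rw [this, Finset.card_singleton]
    · intro a _ b _ hab
      obtain ⟨ha1, -, ha3, ha4⟩ := hprop a.1 a.2
      obtain ⟨hb1, -, hb3, hb4⟩ := hprop b.1 b.2
      have hval : insert a.1.1 a.1.2 = insert b.1.1 b.1.2 := congrArg (fun e => e.1) hab
      have hAS : insert a.1.1 a.1.2 ∩ S = {a.1.1} := by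
        rw [Finset.insert_inter_of_mem ha1, ha4]; simp
      have hBS : insert b.1.1 b.1.2 ∩ S = {b.1.1} := by
        rw [Finset.insert_inter_of_mem hb1, hb4]; simp
      have hv : a.1.1 = b.1.1 := by
        have := hAS.symm.trans ((congrArg (· ∩ S) hval).trans hBS)
        exact Finset.singleton_injective this
      have hT : a.1.2 = b.1.2 := by
        have := congrArg (fun t => t.erase a.1.1) hval
        rwa [Finset.erase_insert ha3, hv, Finset.erase_insert hb3] at this
      exact Subtype.ext (Prod.ext hv hT)
  rw [Finset.card_attach, Finset.card_product, Finset.card_powersetCard,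
    Finset.card_sdiff_of_subset (Finset.subset_univ S), Finset.card_univ, Fintype.card_fin] at hkey
  exact hkey

end Count

section Anal
open Real

lemma pow_self_le_exp_factorial (s : ℕ) :
    (s : ℝ) ^ s ≤ Real.exp 1 ^ s * s.factorial := by
  induction s with
  | zero => simp
  | succ k ih =>
    have hstep : ((k + 1 : ℕ) : ℝ) ^ k ≤ Real.exp 1 * (k : ℝ) ^ k := by
      rcases Nat.eq_zero_or_pos k with hk | hk
      · subst hk; simpa using Real.one_le_exp (by norm_num)
      · have hk0 : (0:ℝ) < k := by exact_mod_cast hk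
        have h1 : ((k + 1 : ℕ) : ℝ) = (k : ℝ) * (1 + 1/(k:ℝ)) := by
          push_cast; field_simp
        have h2 : (1 + 1/(k:ℝ)) ^ k ≤ Real.exp 1 := by
          have hle : 1 + 1/(k:ℝ) ≤ Real.exp (1/(k:ℝ)) := by
            have := Real.add_one_le_exp (1/(k:ℝ)); linarith
          calc (1 + 1/(k:ℝ)) ^ k ≤ Real.exp (1/(k:ℝ)) ^ k :=
                pow_le_pow_left₀ (by positivity) hle k
            _ = Real.exp ((k:ℝ) * (1/(k:ℝ))) := (Real.exp_nat_mul _ k).symm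
            _ = Real.exp 1 := by rw [mul_one_div, div_self (ne_of_gt hk0)]
        calc ((k + 1 : ℕ) : ℝ) ^ k = (k:ℝ)^k * (1 + 1/(k:ℝ))^k := by
              rw [h1, mul_pow]
          _ ≤ (k:ℝ)^k * Real.exp 1 :=
              mul_le_mul_of_nonneg_left h2 (by positivity)
          _ = Real.exp 1 * (k:ℝ)^k := mul_comm _ _
    have hkpos : (0:ℝ) ≤ (k:ℝ) + 1 := by positivity
    calc ((k+1 : ℕ) : ℝ) ^ (k+1) = ((k+1:ℕ):ℝ) * ((k+1:ℕ):ℝ) ^ k := by ring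
      _ ≤ ((k+1:ℕ):ℝ) * (Real.exp 1 * (k:ℝ)^k) := by
          refine mul_le_mul_of_nonneg_left hstep (by positivity)
      _ ≤ ((k+1:ℕ):ℝ) * (Real.exp 1 * (Real.exp 1 ^ k * k.factorial)) := by
          refine mul_le_mul_of_nonneg_left (mul_le_mul_of_nonneg_left ih (le_of_lt (Real.exp_pos 1))) (by positivity)
      _ = Real.exp 1 ^ (k+1) * ((k+1) * k.factorial : ℕ) := by push_cast; ring
      _ = Real.exp 1 ^ (k+1) * (k+1).factorial := by rw [Nat.factorial_succ]

/-- Entropy bound: `C(n,s) ≤ exp (s (1 + log n - log s))` for `1 ≤ s`, `1 ≤ n`. -/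
lemma choose_le_exp_entropy {n s : ℕ} (hs : 1 ≤ s) (hn : 1 ≤ n) :
    (n.choose s : ℝ) ≤ Real.exp ((s : ℝ) * (1 + Real.log n - Real.log s)) := by
  have hs0 : (0:ℝ) < s := by exact_mod_cast hs
  have hn0 : (0:ℝ) < n := by exact_mod_cast hn
  have h1 : (n.choose s : ℝ) ≤ (n:ℝ)^s / s.factorial := Nat.choose_le_pow_div s n
  have hfac : (0:ℝ) < s.factorial := by exact_mod_cast s.factorial_pos
  have h2 : (n:ℝ)^s / s.factorial ≤ (Real.exp 1 * n / s)^s := by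
    rw [div_pow, mul_pow]
    rw [div_le_div_iff₀ hfac (by positivity)]
    calc (n:ℝ)^s * (s:ℝ)^s ≤ (n:ℝ)^s * (Real.exp 1 ^ s * s.factorial) :=
          mul_le_mul_of_nonneg_left (pow_self_le_exp_factorial s) (by positivity)
      _ = Real.exp 1 ^ s * (n:ℝ)^s * s.factorial := by ring
  have h3 : Real.exp 1 * n / s = Real.exp (1 + Real.log n - Real.log s) := by
    rw [Real.exp_sub, Real.exp_add, Real.exp_log hn0, Real.exp_log hs0]
  calc (n.choose s : ℝ) ≤ (Real.exp 1 * n / s)^s := h1.trans h2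
    _ = Real.exp (1 + Real.log n - Real.log s) ^ s := by rw [h3]
    _ = Real.exp ((s:ℝ) * (1 + Real.log n - Real.log s)) := (Real.exp_nat_mul _ s).symm

lemma one_sub_pow_le_exp {p : ℝ} (h0 : 0 ≤ p) (h1 : p ≤ 1) (k : ℕ) :
    (1 - p) ^ k ≤ Real.exp (-(p * k)) := by
  have hle : 1 - p ≤ Real.exp (-p) := by
    have := Real.add_one_le_exp (-p); linarith
  calc (1 - p)^k ≤ Real.exp (-p) ^ k := pow_le_pow_left₀ (by linarith) hle k
    _ = Real.exp ((k:ℝ) * (-p)) := (Real.exp_nat_mul _ k).symm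
    _ = Real.exp (-(p * k)) := by ring_nf

lemma sum_exp_neg_le {a b : ℕ} :
    ∑ s ∈ Finset.Icc a b, Real.exp (-(s:ℝ)) ≤ 2 * Real.exp (-(a:ℝ)) := by
  have hr0 : (0:ℝ) ≤ Real.exp (-1) := le_of_lt (Real.exp_pos _)
  have hr1 : Real.exp (-1) < 1 := by
    rw [Real.exp_lt_one_iff]; norm_num
  have hform : ∀ s : ℕ, Real.exp (-(s:ℝ)) = Real.exp (-1) ^ s := by
    intro s
    rw [← Real.exp_nat_mul]; ring_nf
  have h1 : ∑ s ∈ Finset.Icc a b, Real.exp (-(s:ℝ))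
      = ∑ i ∈ Finset.range (b + 1 - a), Real.exp (-1) ^ (a + i) := by
    rw [Finset.sum_congr rfl (fun s _ => hform s)]
    rw [← Finset.Ico_add_one_right_eq_Icc, Finset.sum_Ico_eq_sum_range]
  rw [h1]
  have h2 : ∀ i ∈ Finset.range (b + 1 - a),
      Real.exp (-1) ^ (a + i) = Real.exp (-1) ^ a * Real.exp (-1) ^ i :=
    fun i _ => pow_add _ a i
  rw [Finset.sum_congr rfl h2, ← Finset.mul_sum]
  have h4 : (0:ℝ) < 1 - Real.exp (-1) := by linarith
  have h3 : ∑ i ∈ Finset.range (b + 1 - a), Real.exp (-1) ^ i ≤ (1 - Real.exp (-1))⁻¹ := by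
    rcases eq_or_ne (Real.exp (-1)) 1 with h | h
    · linarith
    · rw [geom_sum_eq h]
      have heq : (Real.exp (-1) ^ (b + 1 - a) - 1) / (Real.exp (-1) - 1)
          = (1 - Real.exp (-1) ^ (b + 1 - a)) / (1 - Real.exp (-1)) := by
        rw [← neg_div_neg_eq]; ring_nf
      rw [heq, inv_eq_one_div]
      have hk : (0:ℝ) ≤ Real.exp (-1) ^ (b + 1 - a) := by positivity
      exact (div_le_div_iff_of_pos_right h4).mpr (by linarith)
  have h5 : (1 - Real.exp (-1))⁻¹ ≤ 2 := by
    have h2e : (2:ℝ) ≤ Real.exp 1 := by have := Real.add_one_le_exp 1; linarith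
    have : Real.exp (-1) ≤ 1/2 := by
      rw [Real.exp_neg]
      have : (0:ℝ) < Real.exp 1 := Real.exp_pos 1
      rw [inv_le_comm₀ this (by norm_num)]
      linarith
    rw [inv_le_comm₀ h4 (by norm_num)]
    linarith
  have hpa : (0:ℝ) ≤ Real.exp (-1) ^ a := by positivity
  calc Real.exp (-1) ^ a * ∑ i ∈ Finset.range (b + 1 - a), Real.exp (-1) ^ i
      ≤ Real.exp (-1) ^ a * 2 := mul_le_mul_of_nonneg_left (h3.trans h5) hpa
    _ = 2 * Real.exp (-(a:ℝ)) := by rw [hform a]; ring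

end Anal

set_option maxHeartbeats 1000000
section Core
open Real

lemma core_ineq (d l n s : ℕ) (p : ℝ)
    (hd : 1 ≤ d) (hp0 : 0 ≤ p)
    (hAge : Real.log n + l * Real.log (Real.log n)
      ≤ (n:ℝ)^(d:ℕ) * (1 + l*d) * p / d.factorial)
    (hL2 : 2 ≤ Real.log n)
    (hI : 3^d * ((1:ℝ) + l*d) * (2 + Real.log (Real.log n)) ≤ Real.log n)
    (hdn : (d:ℝ) * Real.log n ≤ n)
    (hLd : 4 * (d:ℝ) ≤ Real.log n)
    (h6d : 6 * d ≤ n)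
    (hm : ∃ m : ℝ, Real.exp (2 + 8*(d:ℝ)) * Real.exp ((l:ℝ)*(d:ℝ)/(1+(l:ℝ)*(d:ℝ)) * Real.log n
        - (l:ℝ)/(1+(l:ℝ)*(d:ℝ)) * Real.log (Real.log n)) ≤ m ∧ m ≤ s)
    (hs1 : 1 ≤ s) (h2s : 2 * s ≤ n) :
    2 + Real.log n - Real.log s ≤ p * (((n - s).choose d : ℕ) : ℝ) := by
  obtain ⟨m, hmK, hms⟩ := hm
  set L := Real.log n with hLdef
  set LL := Real.log L with hLLdef
  set A := (n:ℝ)^(d:ℕ) * (1 + l*d) * p / d.factorial with hAdef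
  have hn6 : 6 ≤ n := by omega
  have hn0 : (0:ℝ) < n := by positivity
  have hs0 : (0:ℝ) < s := by exact_mod_cast hs1
  have hsn : s ≤ n := by omega
  have h1ld : (0:ℝ) < 1 + (l:ℝ) * d := by positivity
  have hfac : (0:ℝ) < d.factorial := by exact_mod_cast d.factorial_pos
  have hLL0 : (0:ℝ) ≤ LL := by
    rw [hLLdef]; exact Real.log_nonneg (by linarith)
  have hAL : L ≤ A := by
    have h : (0:ℝ) ≤ (l:ℝ) * LL := by positivity
    linarith [hAge]
  have hA0 : (0:ℝ) ≤ A := by linarith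
  have hL0 : (0:ℝ) < L := by linarith
  set Q : ℝ := ((n:ℝ) - s - d) / n with hQdef
  have hnsd : (6:ℝ) * d ≤ n := by exact_mod_cast h6d
  have h2s' : 2 * (s:ℝ) ≤ n := by exact_mod_cast h2s
  have hd1 : (1:ℝ) ≤ d := by exact_mod_cast hd
  have hn3 : (n:ℝ)/3 ≤ (n:ℝ) - s - d := by nlinarith
  have hQ3 : (1:ℝ)/3 ≤ Q := by
    rw [hQdef, le_div_iff₀ hn0]; nlinarith
  have hQ1 : Q ≤ 1 := by
    rw [hQdef, div_le_one hn0]; nlinarith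
  have hQ0 : (0:ℝ) < Q := lt_of_lt_of_le (by norm_num) hQ3
  -- step 1: binomial lower bound
  have hMd : d ≤ n - s := by omega
  have hcast : ((n - s + 1 - d : ℕ) : ℝ) = (n:ℝ) - s + 1 - d := by
    have h1 : d ≤ n - s + 1 := by omega
    push_cast [Nat.cast_sub h1, Nat.cast_sub hsn]
    ring
  have hstep1 : ((n:ℝ) - s - d)^d / (d.factorial : ℝ) ≤ (((n - s).choose d : ℕ) : ℝ) := by
    refine le_trans ?_ (Nat.pow_le_choose d (n - s))
    rw [hcast]
    gcongr
    · nlinarith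
    · linarith
  have halg : A / (1+(l:ℝ)*d) * Q^d = p * (((n:ℝ) - s - d)^d / d.factorial) := by
    rw [hAdef, hQdef, div_pow]
    field_simp
  -- suffices
  have hsuff : 2 + L - Real.log s ≤ A / (1+(l:ℝ)*d) * Q^d := by
    by_cases hcase : (n:ℝ) ≤ (s:ℝ) * L
    · -- Case I : s large
      have hlogs : L - LL ≤ Real.log s := by
        have hnL : (0:ℝ) < (n:ℝ) / L := by positivity
        have hle : (n:ℝ)/L ≤ s := by rw [div_le_iff₀ hL0]; linarith
        have heq : Real.log ((n:ℝ)/L) = L - LL := by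
          rw [Real.log_div (ne_of_gt hn0) (ne_of_gt hL0)]
        calc L - LL = Real.log ((n:ℝ)/L) := heq.symm
          _ ≤ Real.log s := Real.log_le_log hnL hle
      have hQd : ((1:ℝ)/3)^d ≤ Q^d := pow_le_pow_left₀ (by norm_num) hQ3 d
      have h3d : (0:ℝ) < 3^d := by positivity
      have hLHS : (2 + LL) ≤ A/(1+(l:ℝ)*d) * Q^d := by
        have h1 : (2+LL) ≤ L/(3^d*(1+(l:ℝ)*d)) := by
          rw [le_div_iff₀ (by positivity)]
          nlinarith [hI]
        have h2 : L/(1+(l:ℝ)*d) * (1/3)^d = L/(3^d*(1+(l:ℝ)*d)) := by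
          rw [div_pow, one_pow, div_mul_div_comm, mul_one, mul_comm ((1:ℝ)+(l:ℝ)*d) (3^d)]
        have h3 : L/(1+(l:ℝ)*d) * (1/3)^d ≤ A/(1+(l:ℝ)*d) * Q^d := by
          apply mul_le_mul _ hQd (by positivity) (by positivity)
          gcongr
        linarith
      linarith
    · push_neg at hcase
      have hQlb : 1 - 2/L ≤ Q := by
        have h1 : (L - 2) * n ≤ ((n:ℝ) - s - d) * L := by nlinarith
        have h2 : (1:ℝ) - 2/L = (L-2)/L := by field_simp
        rw [h2, hQdef, div_le_div_iff₀ hL0 hn0]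
        linarith
      have h2L : 2/L ≤ 1 := by rw [div_le_one hL0]; linarith
      have hQdlb : 1 - 2*(d:ℝ)/L ≤ Q^d := by
        have hb : 1 + (d:ℝ) * (-(2/L)) ≤ (1 + (-(2/L)))^d :=
          one_add_mul_le_pow (by linarith) d
        have hb2 : (1 + (-(2/L)))^d ≤ Q^d :=
          pow_le_pow_left₀ (by linarith) (by linarith) d
        have : 1 - 2*(d:ℝ)/L = 1 + (d:ℝ) * (-(2/L)) := by ring
        linarith
      have hhalf : (1:ℝ)/2 ≤ 1 - 2*(d:ℝ)/L := by
        have : 2*(d:ℝ)/L ≤ 1/2 := by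
          rw [div_le_iff₀ hL0]; linarith
        linarith
      by_cases hbig : 2 + L ≤ A/(1+(l:ℝ)*d) * Q^d
      · have hlogs0 : 0 ≤ Real.log s := Real.log_nonneg (by exact_mod_cast hs1)
        linarith
      · push_neg at hbig
        have hQdpos : (0:ℝ) < Q^d := pow_pos hQ0 d
        have hAdiv0 : (0:ℝ) ≤ A/(1+(l:ℝ)*d) := div_nonneg hA0 (le_of_lt h1ld)
        have hAub : A/(1+(l:ℝ)*d) ≤ 2*(2+L) := by
          have h2 : A/(1+(l:ℝ)*d) * (1/2) ≤ A/(1+(l:ℝ)*d) * Q^d := by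
            apply mul_le_mul_of_nonneg_left _ hAdiv0
            linarith
          linarith
        have hQge : A/(1+(l:ℝ)*d) * (1 - 2*(d:ℝ)/L) ≤ A/(1+(l:ℝ)*d)*Q^d :=
          mul_le_mul_of_nonneg_left hQdlb hAdiv0
        have herr : A/(1+(l:ℝ)*d) * (2*(d:ℝ)/L) ≤ 8*d := by
          have h1 : A/(1+(l:ℝ)*d) * (2*(d:ℝ)/L) ≤ 2*(2+L) * (2*(d:ℝ)/L) :=
            mul_le_mul_of_nonneg_right hAub (by positivity)
          have h2 : 2*(2+L) * (2*(d:ℝ)/L) = 4*(d:ℝ)*(2+L)/L := by ring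
          have h3 : 4*(d:ℝ)*(2+L)/L ≤ 8*d := by
            rw [div_le_iff₀ hL0]; nlinarith
          linarith
        have hAlb : (L + (l:ℝ)*LL)/(1+(l:ℝ)*d) - 8*d ≤ A/(1+(l:ℝ)*d)*Q^d := by
          have expand : A/(1+(l:ℝ)*d)*(1 - 2*(d:ℝ)/L)
              = A/(1+(l:ℝ)*d) - A/(1+(l:ℝ)*d)*(2*(d:ℝ)/L) := by ring
          have h2 : (L + (l:ℝ)*LL)/(1+(l:ℝ)*d) ≤ A/(1+(l:ℝ)*d) := by
            gcongr
          linarith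
        have hexp0 : (0:ℝ) < Real.exp (2 + 8*(d:ℝ)) *
            Real.exp ((l:ℝ)*(d:ℝ)/(1+(l:ℝ)*(d:ℝ)) * L - (l:ℝ)/(1+(l:ℝ)*(d:ℝ)) * LL) := by
          positivity
        have hlogm : (2 + 8*(d:ℝ)) + ((l:ℝ)*(d:ℝ)/(1+(l:ℝ)*(d:ℝ)) * L
            - (l:ℝ)/(1+(l:ℝ)*(d:ℝ)) * LL) ≤ Real.log s := by
          have h1 : Real.exp (2 + 8*(d:ℝ)) *
              Real.exp ((l:ℝ)*(d:ℝ)/(1+(l:ℝ)*(d:ℝ)) * L - (l:ℝ)/(1+(l:ℝ)*(d:ℝ)) * LL)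
              ≤ (s:ℝ) := le_trans hmK hms
          calc (2 + 8*(d:ℝ)) + ((l:ℝ)*(d:ℝ)/(1+(l:ℝ)*(d:ℝ)) * L - (l:ℝ)/(1+(l:ℝ)*(d:ℝ)) * LL)
              = Real.log (Real.exp (2 + 8*(d:ℝ)) *
                Real.exp ((l:ℝ)*(d:ℝ)/(1+(l:ℝ)*(d:ℝ)) * L - (l:ℝ)/(1+(l:ℝ)*(d:ℝ)) * LL)) := by
                rw [Real.log_mul (Real.exp_ne_zero _) (Real.exp_ne_zero _),
                  Real.log_exp, Real.log_exp]
            _ ≤ Real.log s := Real.log_le_log hexp0 h1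
        have key : 2 + L - ((2 + 8*(d:ℝ)) + ((l:ℝ)*(d:ℝ)/(1+(l:ℝ)*(d:ℝ)) * L
            - (l:ℝ)/(1+(l:ℝ)*(d:ℝ)) * LL)) = (L + (l:ℝ)*LL)/(1+(l:ℝ)*d) - 8*d := by
          field_simp
          ring
        linarith
  calc 2 + L - Real.log s ≤ A / (1+(l:ℝ)*d) * Q^d := hsuff
    _ = p * (((n:ℝ) - s - d)^d / d.factorial) := halg
    _ ≤ p * (((n - s).choose d : ℕ) : ℝ) := mul_le_mul_of_nonneg_left hstep1 hp0

end Core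

section Main
open Real

lemma log_nat_ge_one {n : ℕ} (hn : 3 ≤ n) : 1 ≤ Real.log n := by
  have hn0 : (0:ℝ) < n := by positivity
  rw [Real.le_log_iff_exp_le hn0]
  have := Real.exp_one_lt_d9
  have h3 : (3:ℝ) ≤ n := by exact_mod_cast hn
  linarith

lemma log_nat_ge_two {n : ℕ} (hn : 8 ≤ n) : 2 ≤ Real.log n := by
  have hn0 : (0:ℝ) < n := by positivity
  rw [Real.le_log_iff_exp_le hn0]
  have h1 := Real.exp_one_lt_d9
  have h8 : (8:ℝ) ≤ n := by exact_mod_cast hn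
  have h2 : Real.exp 2 = Real.exp 1 * Real.exp 1 := by
    rw [← Real.exp_add]; norm_num
  nlinarith [Real.exp_pos 1]


/-- Let `p` satisfy `c_l(n) = n^d(1+l*d)p/d! - log n - l log log n → +∞`. Then for any
`f(n) ≫ n^{l*d/(1+l*d)} (log n)^{-l/(1+l*d)}`, a.a.s. the number `μ` of vertices outside
the largest component satisfies `μ < f(n)`. -/
theorem stmt_17 (d l : ℕ) (p : ℕ → ℝ) (hp : ∀ n, 0 ≤ p n ∧ p n ≤ 1)
    (hcl : Tendsto (fun (n : ℕ) => (n : ℝ) ^ (d : ℕ) * (1 + l * d) * p n / Nat.factorial d -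
      Real.log n - l * Real.log (Real.log n)) atTop atTop)
    (f : ℕ → ℝ)
    (hf : Tendsto (fun n => f n /
        ((n : ℝ) ^ ((l * d : ℝ) / (1 + l * d)) * Real.log n ^ (-(l : ℝ) / (1 + l * d))))
      atTop atTop) :
    Tendsto (fun n => hprob d n (p n) fun H => (mu H : ℝ) < f n) atTop (nhds 1) := by
  classical
  open Filter in
  rcases Nat.eq_zero_or_pos d with hd0 | hdpos
  · -- d = 0 : hypothesis hcl is contradictory
    exfalso
    subst hd0
    have h2 := hcl.eventually_ge_atTop 2
    have hub : ∀ᶠ n : ℕ in atTop, ((n:ℝ) ^ (0:ℕ) * (1 + (l:ℝ) * 0) * p n / Nat.factorial 0 -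
        Real.log n - l * Real.log (Real.log n)) ≤ 1 - Real.log n := by
      filter_upwards [eventually_ge_atTop 3] with n hn
      have h1 : p n ≤ 1 := (hp n).2
      have hln : (1:ℝ) ≤ Real.log n := log_nat_ge_one hn
      have hll : (0:ℝ) ≤ Real.log (Real.log n) := Real.log_nonneg hln
      have hl0 : (0:ℝ) ≤ (l:ℝ) * Real.log (Real.log n) := by positivity
      simp only [pow_zero, Nat.cast_zero, mul_zero, add_zero, Nat.factorial_zero,
        Nat.cast_one, div_one, one_mul, mul_one]
      linarith
    have h3 : ∀ᶠ n : ℕ in atTop, (1:ℝ) ≤ Real.log n := by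
      filter_upwards [eventually_ge_atTop 3] with n hn using log_nat_ge_one hn
    obtain ⟨n, hn2, hnub, hn3⟩ := (h2.and (hub.and h3)).exists
    push_cast at hn2 hnub
    linarith [hn2, hnub, hn3]
  · -- main case d ≥ 1
    have h1ld : (0:ℝ) < 1 + (l:ℝ)*d := by positivity
    have hd1 : (1:ℝ) ≤ (d:ℝ) := by exact_mod_cast hdpos
    set thr : ℕ → ℝ := fun n => (n:ℝ) ^ ((l * d : ℝ) / (1 + l * d)) *
      Real.log n ^ (-(l:ℝ) / (1 + l * d)) with hthrdef
    have hf' : Filter.Tendsto (fun n => f n / thr n) Filter.atTop Filter.atTop := hf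
    set m : ℕ → ℝ := fun n => min (f n) ((n:ℝ)/8) with hmdef
    set s₀ : ℕ → ℕ := fun n => ⌈m n⌉₊ with hs₀def
    have htendL : Filter.Tendsto (fun n:ℕ => Real.log n) Filter.atTop Filter.atTop :=
      Real.tendsto_log_atTop.comp tendsto_natCast_atTop_atTop
    have hLLtend : Filter.Tendsto (fun n:ℕ => Real.log (Real.log n) / Real.log n)
        Filter.atTop (nhds 0) := by
      have h := Real.isLittleO_log_id_atTop.comp_tendsto htendL
      simpa [Function.comp] using h.tendsto_div_nhds_zero
    have hthr_eq : ∀ᶠ n : ℕ in Filter.atTop, thr n =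
        Real.exp ((l:ℝ)*(d:ℝ)/(1+(l:ℝ)*(d:ℝ)) * Real.log n
          - (l:ℝ)/(1+(l:ℝ)*(d:ℝ)) * Real.log (Real.log n)) := by
      filter_upwards [Filter.eventually_ge_atTop 3] with n hn
      have hn0 : (0:ℝ) < n := by positivity
      have hL1 : (1:ℝ) ≤ Real.log n := log_nat_ge_one hn
      have hL0 : (0:ℝ) < Real.log n := by linarith
      show (n:ℝ) ^ ((l * d : ℝ) / (1 + l * d)) * Real.log n ^ (-(l:ℝ) / (1 + l * d)) = _
      rw [Real.rpow_def_of_pos hn0, Real.rpow_def_of_pos hL0, ← Real.exp_add]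
      exact congrArg Real.exp (by ring)
    have hthr_exp0 : ∀ᶠ n : ℕ in Filter.atTop, (0:ℝ) ≤
        (l:ℝ)*(d:ℝ)/(1+(l:ℝ)*(d:ℝ)) * Real.log n
          - (l:ℝ)/(1+(l:ℝ)*(d:ℝ)) * Real.log (Real.log n) := by
      filter_upwards [Filter.eventually_ge_atTop 8] with n hn
      have hL2 : 2 ≤ Real.log n := log_nat_ge_two hn
      have hL0 : (0:ℝ) < Real.log n := by linarith
      have hLLle : Real.log (Real.log n) ≤ Real.log n :=
        le_trans (Real.log_le_sub_one_of_pos hL0) (by linarith)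
      have heq : (l:ℝ)*(d:ℝ)/(1+(l:ℝ)*(d:ℝ)) * Real.log n
          - (l:ℝ)/(1+(l:ℝ)*(d:ℝ)) * Real.log (Real.log n)
          = (l:ℝ) * ((d:ℝ) * Real.log n - Real.log (Real.log n)) / (1+(l:ℝ)*(d:ℝ)) := by
        field_simp
      rw [heq]
      apply div_nonneg _ (le_of_lt h1ld)
      apply mul_nonneg (Nat.cast_nonneg l)
      nlinarith
    have hthr1 : ∀ᶠ n : ℕ in Filter.atTop, (1:ℝ) ≤ thr n := by
      filter_upwards [hthr_eq, hthr_exp0] with n h1 h2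
      rw [h1]
      exact Real.one_le_exp h2
    have hn8top : Filter.Tendsto (fun n:ℕ => ((n:ℝ)/8)/thr n) Filter.atTop Filter.atTop := by
      have hαlt : (l:ℝ)*(d:ℝ)/(1+(l:ℝ)*(d:ℝ)) < 1 := by
        rw [div_lt_one h1ld]; linarith
      have hpow : Filter.Tendsto (fun x:ℝ => x ^ ((1:ℝ) - (l:ℝ)*(d:ℝ)/(1+(l:ℝ)*(d:ℝ))) / 8)
          Filter.atTop Filter.atTop :=
        (tendsto_rpow_atTop (by linarith)).atTop_div_const (by norm_num)
      refine Filter.tendsto_atTop_mono' Filter.atTop ?_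
        (hpow.comp tendsto_natCast_atTop_atTop)
      filter_upwards [Filter.eventually_ge_atTop 3] with n hn
      have hn0 : (0:ℝ) < n := by positivity
      have hL1 : (1:ℝ) ≤ Real.log n := log_nat_ge_one hn
      have hL0 : (0:ℝ) < Real.log n := by linarith
      have hthr_pos : 0 < thr n :=
        mul_pos (Real.rpow_pos_of_pos hn0 _) (Real.rpow_pos_of_pos hL0 _)
      have hthr_le : thr n ≤ (n:ℝ) ^ ((l * d : ℝ) / (1 + l * d)) := by
        have h2 : Real.log n ^ (-(l:ℝ)/(1+(l:ℝ)*(d:ℝ))) ≤ 1 :=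
          Real.rpow_le_one_of_one_le_of_nonpos hL1
            (div_nonpos_of_nonpos_of_nonneg (by simp) (le_of_lt h1ld))
        calc thr n ≤ (n:ℝ) ^ ((l * d : ℝ) / (1 + l * d)) * 1 := by
              exact mul_le_mul_of_nonneg_left h2 (Real.rpow_nonneg (le_of_lt hn0) _)
          _ = (n:ℝ) ^ ((l * d : ℝ) / (1 + l * d)) := mul_one _
      show ((fun x:ℝ => x ^ ((1:ℝ) - (l:ℝ)*(d:ℝ)/(1+(l:ℝ)*(d:ℝ))) / 8) ∘ (Nat.cast : ℕ → ℝ)) n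
        ≤ ((n:ℝ)/8)/thr n
      have heq : ((fun x:ℝ => x ^ ((1:ℝ) - (l:ℝ)*(d:ℝ)/(1+(l:ℝ)*(d:ℝ))) / 8) ∘
          (Nat.cast : ℕ → ℝ)) n = ((n:ℝ)/8)/((n:ℝ) ^ ((l * d : ℝ) / (1 + l * d))) := by
        show (n:ℝ) ^ ((1:ℝ) - (l:ℝ)*(d:ℝ)/(1+(l:ℝ)*(d:ℝ))) / 8 = _
        rw [Real.rpow_sub hn0, Real.rpow_one]
        ring
      rw [heq]
      exact div_le_div_of_nonneg_left (by positivity) hthr_pos hthr_le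
    have hMge : ∀ C : ℝ, ∀ᶠ n : ℕ in Filter.atTop, C * thr n ≤ m n := by
      intro C
      filter_upwards [hf'.eventually_ge_atTop C, hn8top.eventually_ge_atTop C, hthr1]
        with n h1 h2 h3
      have hthr0 : 0 < thr n := lt_of_lt_of_le one_pos h3
      exact le_min ((le_div_iff₀ hthr0).mp h1) ((le_div_iff₀ hthr0).mp h2)
    have hKexp : ∀ᶠ n : ℕ in Filter.atTop,
        Real.exp (2 + 8*(d:ℝ)) * Real.exp ((l:ℝ)*(d:ℝ)/(1+(l:ℝ)*(d:ℝ)) * Real.log n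
          - (l:ℝ)/(1+(l:ℝ)*(d:ℝ)) * Real.log (Real.log n)) ≤ m n := by
      filter_upwards [hMge (Real.exp (2 + 8*(d:ℝ))), hthr_eq] with n h1 h2
      rw [← h2]
      exact h1
    have hs₀top : Filter.Tendsto s₀ Filter.atTop Filter.atTop := by
      refine Filter.tendsto_atTop.mpr fun b => ?_
      filter_upwards [hMge (b:ℝ), hthr1] with n h1 h2
      have hbm : (b:ℝ) ≤ m n := by nlinarith [Nat.cast_nonneg (α := ℝ) b]
      calc b = ⌈(b:ℝ)⌉₊ := (Nat.ceil_natCast b).symm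
        _ ≤ ⌈m n⌉₊ := Nat.ceil_mono hbm
    have hI_ev : ∀ᶠ n : ℕ in Filter.atTop,
        3^d * ((1:ℝ) + l*d) * (2 + Real.log (Real.log n)) ≤ Real.log n := by
      have hC : (0:ℝ) < 3^d * (1 + (l:ℝ)*d) := by positivity
      have h1 : ∀ᶠ n : ℕ in Filter.atTop, Real.log (Real.log n) / Real.log n
          ≤ 1/(2*(3^d * (1 + (l:ℝ)*d))) :=
        hLLtend.eventually (eventually_le_nhds (by positivity))
      filter_upwards [h1, htendL.eventually_ge_atTop (4*(3^d * (1 + (l:ℝ)*d))),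
        Filter.eventually_ge_atTop 3] with n hn1 hn2 hn3
      have hL1 : (1:ℝ) ≤ Real.log n := log_nat_ge_one hn3
      have hL0 : (0:ℝ) < Real.log n := by linarith
      have hLLle : Real.log (Real.log n) ≤ 1/(2*(3^d * (1 + (l:ℝ)*d))) * Real.log n :=
        (div_le_iff₀ hL0).mp hn1
      have h2C : (0:ℝ) < 2*(3^d * (1 + (l:ℝ)*d)) := by positivity
      have hkey : (3^d * ((1:ℝ) + l*d)) * (1/(2*(3^d * (1 + (l:ℝ)*d)))) = 1/2 := by
        field_simp
      nlinarith [mul_le_mul_of_nonneg_left hLLle (le_of_lt hC)]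
    have hdn_ev : ∀ᶠ n : ℕ in Filter.atTop, (d:ℝ) * Real.log n ≤ n := by
      have hd0 : (0:ℝ) < (d:ℝ) := by linarith
      have h := Real.isLittleO_log_id_atTop.def (c := 1/(d:ℝ)) (by positivity)
      filter_upwards [tendsto_natCast_atTop_atTop.eventually h,
        Filter.eventually_ge_atTop 3] with n h1 h3
      have hL1 : (1:ℝ) ≤ Real.log n := log_nat_ge_one h3
      have hn0 : (0:ℝ) ≤ (n:ℝ) := Nat.cast_nonneg n
      simp only [Real.norm_eq_abs, id_eq] at h1
      rw [abs_of_nonneg (by linarith), abs_of_nonneg hn0] at h1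
      have h2 := mul_le_mul_of_nonneg_left h1 (le_of_lt hd0)
      have h3' : (d:ℝ) * (1/(d:ℝ) * n) = n := by
        field_simp
      linarith [h2, h3'.le, h3'.ge]
    have hLd_ev : ∀ᶠ n : ℕ in Filter.atTop, 4*(d:ℝ) ≤ Real.log n :=
      htendL.eventually_ge_atTop (4*(d:ℝ))
    -- the main eventual bound
    have hbound : ∀ᶠ n : ℕ in Filter.atTop,
        hprob d n (p n) (fun H => ¬((mu H:ℝ) < f n)) ≤ 2 * Real.exp (-(s₀ n:ℝ)) := by
      filter_upwards [hcl.eventually_ge_atTop 0, Filter.eventually_ge_atTop 8,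
        Filter.eventually_ge_atTop (6*d), hI_ev, hdn_ev, hLd_ev, hKexp]
        with n hAge0 hn8 h6d hI hdn hLd hKm
      have hp0 := (hp n).1
      have hp1 := (hp n).2
      have hL2 : 2 ≤ Real.log n := log_nat_ge_two hn8
      have hm0 : 0 < m n := lt_of_lt_of_le (by positivity) hKm
      have hs01 : 1 ≤ s₀ n := Nat.one_le_iff_ne_zero.mpr (Nat.pos_iff_ne_zero.mp
        (Nat.ceil_pos.mpr hm0))
      have hmn8 : m n ≤ (n:ℝ)/8 := min_le_right _ _
      have h4s : 4 * s₀ n ≤ n := by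
        have h1 : (⌈m n⌉₊ : ℝ) < m n + 1 := Nat.ceil_lt_add_one (le_of_lt hm0)
        have h8 : (8:ℝ) ≤ n := by exact_mod_cast hn8
        have h2 : ((4 * s₀ n : ℕ) : ℝ) ≤ (n:ℝ) := by
          push_cast
          show (4:ℝ) * (⌈m n⌉₊:ℝ) ≤ (n:ℝ)
          nlinarith
        exact_mod_cast h2
      have hAge : Real.log n + l * Real.log (Real.log n)
          ≤ (n:ℝ)^(d:ℕ)*(1+l*d)*(p n)/(Nat.factorial d) := by linarith [hAge0]
      set 𝒮 : Finset (Finset (Fin n)) :=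
        Finset.univ.filter (fun S => s₀ n ≤ S.card ∧ 2*S.card ≤ n) with h𝒮
      have hstep : ∀ H, (¬((mu H:ℝ) < f n)) → ∃ S ∈ 𝒮, Disjoint H (crossE d n S) := by
        intro H hbad
        have hfle : f n ≤ (mu H : ℝ) := le_of_not_gt hbad
        have hmle : m n ≤ (mu H : ℝ) := le_trans (min_le_left _ _) hfle
        have hs0mu : s₀ n ≤ mu H := Nat.ceil_le.mpr hmle
        obtain ⟨S, hclosed, hcard1, hcard2⟩ := exists_closed_medium H (s₀ n) hs01 h4s hs0mu
        exact ⟨S, by simp [h𝒮, hcard1, hcard2], closed_disjoint_crossE hdpos hclosed⟩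
      have hSbound : ∀ S ∈ 𝒮, (1 - p n)^(crossE d n S).card
          ≤ Real.exp (-((S.card:ℝ) * (2 + Real.log n - Real.log S.card))) := by
        intro S hS
        rw [h𝒮, Finset.mem_filter] at hS
        obtain ⟨-, hcard1, hcard2⟩ := hS
        have hms : m n ≤ (S.card : ℝ) := by
          calc m n ≤ (⌈m n⌉₊ : ℝ) := Nat.le_ceil _
            _ ≤ (S.card : ℝ) := by exact_mod_cast hcard1
        have hcore := core_ineq d l n S.card (p n) hdpos hp0 hAge hL2 hI hdn hLd h6d
          ⟨m n, hKm, hms⟩ (le_trans hs01 hcard1) hcard2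
        have hs0' : (0:ℝ) ≤ (S.card:ℝ) := Nat.cast_nonneg _
        have hmul : (S.card:ℝ) * (2 + Real.log n - Real.log S.card)
            ≤ p n * ((S.card * ((n - S.card).choose d) : ℕ) : ℝ) := by
          push_cast
          calc (S.card:ℝ) * (2 + Real.log n - Real.log S.card)
              ≤ (S.card:ℝ) * (p n * (((n - S.card).choose d : ℕ):ℝ)) :=
                mul_le_mul_of_nonneg_left hcore hs0'
            _ = p n * ((S.card:ℝ) * (((n - S.card).choose d : ℕ):ℝ)) := by ring
        calc (1 - p n)^(crossE d n S).card
            ≤ (1 - p n)^(S.card * ((n - S.card).choose d)) :=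
              pow_le_pow_of_le_one (by linarith) (by linarith) card_crossE_ge
          _ ≤ Real.exp (-(p n * ((S.card * ((n - S.card).choose d) : ℕ) : ℝ))) :=
              one_sub_pow_le_exp hp0 hp1 _
          _ ≤ Real.exp (-((S.card:ℝ) * (2 + Real.log n - Real.log S.card))) := by
              rw [Real.exp_le_exp]
              exact neg_le_neg hmul
      have hgroup : ∑ S ∈ 𝒮, Real.exp (-((S.card:ℝ) * (2 + Real.log n - Real.log S.card)))
          ≤ ∑ s ∈ Finset.Icc (s₀ n) n,
            (n.choose s : ℝ) * Real.exp (-((s:ℝ) * (2 + Real.log n - Real.log s))) := by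
        have hsub : 𝒮 ⊆ (Finset.Icc (s₀ n) n).biUnion
            (fun s => Finset.powersetCard s Finset.univ) := by
          intro S hS
          rw [h𝒮, Finset.mem_filter] at hS
          refine Finset.mem_biUnion.mpr ⟨S.card, ?_, ?_⟩
          · rw [Finset.mem_Icc]
            refine ⟨hS.2.1, ?_⟩
            calc S.card ≤ Fintype.card (Fin n) := Finset.card_le_univ S
              _ = n := Fintype.card_fin n
          · exact Finset.mem_powersetCard.mpr ⟨Finset.subset_univ S, rfl⟩
        calc ∑ S ∈ 𝒮, Real.exp (-((S.card:ℝ) * (2 + Real.log n - Real.log S.card)))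
            ≤ ∑ S ∈ (Finset.Icc (s₀ n) n).biUnion
                (fun s => Finset.powersetCard s Finset.univ),
                Real.exp (-((S.card:ℝ) * (2 + Real.log n - Real.log S.card))) :=
              Finset.sum_le_sum_of_subset_of_nonneg hsub
                (fun _ _ _ => le_of_lt (Real.exp_pos _))
          _ = ∑ s ∈ Finset.Icc (s₀ n) n, ∑ S ∈ Finset.powersetCard s Finset.univ,
                Real.exp (-((S.card:ℝ) * (2 + Real.log n - Real.log S.card))) := by
              refine Finset.sum_biUnion ?_
              intro a _ b _ hab
              refine Finset.disjoint_left.mpr fun S hSa hSb => hab ?_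
              rw [← (Finset.mem_powersetCard.mp hSa).2, ← (Finset.mem_powersetCard.mp hSb).2]
          _ = ∑ s ∈ Finset.Icc (s₀ n) n,
                (n.choose s : ℝ) * Real.exp (-((s:ℝ) * (2 + Real.log n - Real.log s))) := by
              refine Finset.sum_congr rfl fun s _ => ?_
              rw [Finset.sum_congr rfl (fun S hS => by
                rw [(Finset.mem_powersetCard.mp hS).2])]
              rw [Finset.sum_const, Finset.card_powersetCard, Finset.card_univ,
                Fintype.card_fin, nsmul_eq_mul]
      have hentropy : ∀ s ∈ Finset.Icc (s₀ n) n,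
          (n.choose s : ℝ) * Real.exp (-((s:ℝ) * (2 + Real.log n - Real.log s)))
            ≤ Real.exp (-(s:ℝ)) := by
        intro s hs
        rw [Finset.mem_Icc] at hs
        have hs1 : 1 ≤ s := le_trans hs01 hs.1
        have hn1 : 1 ≤ n := by omega
        calc (n.choose s : ℝ) * Real.exp (-((s:ℝ) * (2 + Real.log n - Real.log s)))
            ≤ Real.exp ((s:ℝ) * (1 + Real.log n - Real.log s)) *
              Real.exp (-((s:ℝ) * (2 + Real.log n - Real.log s))) :=
              mul_le_mul_of_nonneg_right (choose_le_exp_entropy hs1 hn1)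
                (le_of_lt (Real.exp_pos _))
          _ = Real.exp (-(s:ℝ)) := by
              rw [← Real.exp_add]
              exact congrArg Real.exp (by ring)
      calc hprob d n (p n) (fun H => ¬((mu H:ℝ) < f n))
          ≤ hprob d n (p n) (fun H => ∃ S ∈ 𝒮, Disjoint H (crossE d n S)) :=
            hprob_mono hp0 hp1 hstep
        _ ≤ ∑ S ∈ 𝒮, hprob d n (p n) (fun H => Disjoint H (crossE d n S)) :=
            hprob_sum_le hp0 hp1 𝒮 _
        _ = ∑ S ∈ 𝒮, (1 - p n)^(crossE d n S).card :=
            Finset.sum_congr rfl (fun S _ => hprob_disjoint _)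
        _ ≤ ∑ S ∈ 𝒮, Real.exp (-((S.card:ℝ) * (2 + Real.log n - Real.log S.card))) :=
            Finset.sum_le_sum hSbound
        _ ≤ ∑ s ∈ Finset.Icc (s₀ n) n,
              (n.choose s : ℝ) * Real.exp (-((s:ℝ) * (2 + Real.log n - Real.log s))) :=
            hgroup
        _ ≤ ∑ s ∈ Finset.Icc (s₀ n) n, Real.exp (-(s:ℝ)) := Finset.sum_le_sum hentropy
        _ ≤ 2 * Real.exp (-(s₀ n:ℝ)) := sum_exp_neg_le
    -- squeeze and conclude
    have hnonneg : ∀ n, 0 ≤ hprob d n (p n) (fun H => ¬((mu H:ℝ) < f n)) :=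
      fun n => hprob_nonneg (hp n).1 (hp n).2 _
    have htend0 : Filter.Tendsto (fun n => 2 * Real.exp (-(s₀ n:ℝ)))
        Filter.atTop (nhds 0) := by
      have h1 : Filter.Tendsto (fun n:ℕ => -((s₀ n:ℕ):ℝ)) Filter.atTop Filter.atBot :=
        tendsto_neg_atTop_atBot.comp (tendsto_natCast_atTop_atTop.comp hs₀top)
      have h2 := Real.tendsto_exp_atBot.comp h1
      have h3 := h2.const_mul (2:ℝ)
      simpa using h3
    have hbad : Filter.Tendsto (fun n => hprob d n (p n) (fun H => ¬((mu H:ℝ) < f n)))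
        Filter.atTop (nhds 0) :=
      squeeze_zero' (Filter.Eventually.of_forall hnonneg) hbound htend0
    have hco : ∀ nn : ℕ, hprob d nn (p nn) (fun H => (mu H:ℝ) < f nn)
        = 1 - hprob d nn (p nn) (fun H => ¬((mu H:ℝ) < f nn)) := by
      intro nn
      have := hprob_add_compl (d := d) (n := nn) (p := p nn)
        (fun H => (mu H:ℝ) < f nn)
      linarith
    simp only [hco]
    have hfin := (tendsto_const_nhds (x := (1:ℝ)) (f := Filter.atTop (α := ℕ))).sub hbad
    simpa using hfin

end Main
end
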